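/- Let q > 1 be a real number, let (k_1, ℓ_1), ..., (k_n, ℓ_n) be pairwise distinct pairs of integers, and let c_1, ..., c_n be real numbers. Define g : ℤ → ℝ by g(t) = Σ_{i=1}^n c_i t^{k_i} q^{ℓ_i t}. If there exists a_0 ∈ ℤ such that g(t) = 0 for all integers t ≥ a_0, then c_i = 0 for all i. -/

import Mathlib

open Filter Finset

private lemma int_toNat_tendsto : Tendsto Int.toNat atTop atTop :=
  tendsto_atTop_atTop.2 fun b => ⟨(b : ℤ), fun a ha => by omega⟩

/-- Key analytic lemma: `t^a * q^(b*t) → 0` when `(b,a) <lex (0,0)`. -/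
private lemma tendsto_term {q : ℝ} (hq : 1 < q) {a b : ℤ}
    (h : b < 0 ∨ (b = 0 ∧ a < 0)) :
    Tendsto (fun t : ℤ => (t : ℝ) ^ a * q ^ (b * t)) atTop (nhds 0) := by
  have hq0 : (0:ℝ) < q := lt_trans one_pos hq
  rcases h with hb | ⟨hb, ha⟩
  · -- exponential decay dominates
    set r : ℝ := q ^ b with hr
    have hr0 : 0 < r := zpow_pos hq0 b
    have hr1 : r < 1 := by
      have : q ^ b < q ^ (0:ℤ) := zpow_lt_zpow_right₀ hq hb
      simpa using this
    set m : ℕ := (max a 0).toNat with hm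
    have ham : a ≤ (m : ℤ) := by simp only [hm]; omega
    have hF : Tendsto (fun n : ℕ => (n : ℝ) ^ m * r ^ n) atTop (nhds 0) :=
      tendsto_pow_const_mul_const_pow_of_lt_one m hr0.le hr1
    have hG : Tendsto (fun t : ℤ => ((t.toNat : ℝ)) ^ m * r ^ t.toNat) atTop (nhds 0) :=
      hF.comp int_toNat_tendsto
    apply squeeze_zero' (g := fun t : ℤ => ((t.toNat : ℝ)) ^ m * r ^ t.toNat)
    · filter_upwards [eventually_ge_atTop (1:ℤ)] with t ht
      have ht0 : (0:ℝ) < (t:ℝ) := by exact_mod_cast ht.trans_lt' zero_lt_one |>.le.lt_of_ne (by exact_mod_cast (by omega : (0:ℤ) ≠ t))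
      positivity
    · filter_upwards [eventually_ge_atTop (1:ℤ)] with t ht
      have ht1 : (1:ℝ) ≤ (t:ℝ) := by exact_mod_cast ht
      have h1 : (t:ℝ) ^ a ≤ (t:ℝ) ^ (m:ℤ) := zpow_le_zpow_right₀ ht1 ham
      have h2 : ((t.toNat : ℝ)) = (t:ℝ) := by
        rw [← Int.cast_natCast, Int.toNat_of_nonneg (by omega)]
      have h3 : q ^ (b * t) = r ^ t.toNat := by
        rw [hr, ← zpow_natCast, ← zpow_mul, Int.toNat_of_nonneg (by omega : (0:ℤ) ≤ t)]
      rw [h3, h2, ← zpow_natCast ((t:ℝ)) m]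
      have hrt : 0 < r ^ t.toNat := pow_pos hr0 _
      exact mul_le_mul_of_nonneg_right h1 hrt.le
    · exact hG
  · subst hb
    simp only [zero_mul, zpow_zero, mul_one]
    exact (tendsto_zpow_atTop_zero ha).comp tendsto_intCast_atTop_atTop

/-- If a function `g(t) = ∑ cᵢ t^{kᵢ} q^{ℓᵢ t}` (with `q > 1` and pairwise distinct
pairs `(kᵢ, ℓᵢ)` of integers) vanishes at all sufficiently large integers `t`,
then all coefficients `cᵢ` vanish. -/
theorem stmt4 {q : ℝ} (hq : 1 < q) {n : ℕ} (k l : Fin n → ℤ)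
    (hdist : Function.Injective (fun i => (k i, l i)))
    (c : Fin n → ℝ)
    (hvanish : ∃ a₀ : ℤ, ∀ t : ℤ, a₀ ≤ t →
      ∑ i, c i * (t : ℝ) ^ (k i) * q ^ (l i * t) = 0) :
    ∀ i, c i = 0 := by
  have hq0 : (0:ℝ) < q := lt_trans one_pos hq
  -- generalize to Finsets and do strong induction
  suffices H : ∀ s : Finset (Fin n),
      (∃ a₀ : ℤ, ∀ t : ℤ, a₀ ≤ t →
        ∑ i ∈ s, c i * (t : ℝ) ^ (k i) * q ^ (l i * t) = 0) →
      ∀ i ∈ s, c i = 0 by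
    intro i
    exact H Finset.univ hvanish i (Finset.mem_univ i)
  intro s
  induction s using Finset.strongInduction with
  | _ s ih =>
    rcases s.eq_empty_or_nonempty with rfl | hne
    · rintro - i hi; exact absurd hi (by simp)
    rintro ⟨a₀, hv⟩
    obtain ⟨i₀, hi₀s, hmax⟩ := s.exists_max_image (fun i => toLex (l i, k i)) hne
    -- define the renormalized function
    set h : ℤ → ℝ := fun t =>
      ∑ i ∈ s, c i * (t : ℝ) ^ (k i - k i₀) * q ^ ((l i - l i₀) * t) with hh
    -- h tends to c i₀
    have hlim : Tendsto h atTop (nhds (c i₀)) := by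
      have : Tendsto h atTop (nhds (∑ i ∈ s, if i = i₀ then c i₀ else 0)) := by
        apply tendsto_finset_sum
        intro i hi
        by_cases hii : i = i₀
        · subst hii
          simp only [sub_self, zero_mul, zpow_zero, mul_one, if_pos rfl]
          exact tendsto_const_nhds
        · rw [if_neg hii]
          have hlt : toLex (l i, k i) < toLex (l i₀, k i₀) := by
            rcases lt_or_eq_of_le (hmax i hi) with h' | h'
            · exact h'
            · exfalso; apply hii
              apply hdist
              have h'' := toLex_inj.1 h'
              rw [Prod.mk.injEq] at h''
              simp only [Prod.mk.injEq]
              exact ⟨h''.2, h''.1⟩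
          have hcase : l i - l i₀ < 0 ∨ (l i - l i₀ = 0 ∧ k i - k i₀ < 0) := by
            rcases Prod.Lex.lt_iff.1 hlt with h' | ⟨h1, h2⟩
            · left; simp only [ofLex_toLex] at h'; omega
            · right; simp only [ofLex_toLex] at h1 h2; omega
          have := Filter.Tendsto.const_mul (c i) (tendsto_term hq hcase)
          rw [mul_zero] at this
          simpa only [mul_assoc] using this
      simpa [Finset.sum_ite_eq' s i₀, hi₀s] using this
    -- h is eventually 0
    have hzero : ∀ᶠ t : ℤ in atTop, h t = 0 := by
      filter_upwards [eventually_ge_atTop (max a₀ 1)] with t ht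
      have ht1 : (1:ℤ) ≤ t := le_trans (le_max_right _ _) ht
      have hta : a₀ ≤ t := le_trans (le_max_left _ _) ht
      have ht0 : ((t:ℝ)) ≠ 0 := by
        have : (0:ℤ) < t := by omega
        exact_mod_cast this.ne'
      have hq0' : q ≠ 0 := hq0.ne'
      have : h t = ((t:ℝ) ^ (k i₀) * q ^ (l i₀ * t))⁻¹ *
          ∑ i ∈ s, c i * (t : ℝ) ^ (k i) * q ^ (l i * t) := by
        rw [hh, Finset.mul_sum]
        refine Finset.sum_congr rfl fun i hi => ?_
        rw [sub_mul, zpow_sub₀ ht0, zpow_sub₀ hq0', mul_inv]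
        field_simp
      rw [this, hv t hta, mul_zero]
    -- conclude c i₀ = 0
    have hci₀ : c i₀ = 0 := by
      have : Tendsto h atTop (nhds 0) :=
        Tendsto.congr' (Filter.EventuallyEq.symm (hzero.mono fun t h => h))
          tendsto_const_nhds
      exact tendsto_nhds_unique hlim this
    -- the rest vanishes: apply induction hypothesis to s.erase i₀
    have hrest : ∀ i ∈ s.erase i₀, c i = 0 := by
      apply ih (s.erase i₀) (Finset.erase_ssubset hi₀s)
      refine ⟨a₀, fun t ht => ?_⟩
      have := hv t ht
      rwa [← Finset.add_sum_erase s _ hi₀s, hci₀, zero_mul, zero_mul, zero_add] at this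
    intro i hi
    by_cases hii : i = i₀
    · subst hii; exact hci₀
    · exact hrest i (Finset.mem_erase.2 ⟨hii, hi⟩)
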